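/- Let ε̃ and μ̃ be real symmetric positive-definite 2×2 matrices which are NOT scalar multiples of each other, and let K ∈ ℝ. Suppose that for every ξ in some nonempty open subset U of ℝ² \ {0} and every η ∈ ℝ², K·[ (√(ξᵀε̃ξ)/√(ξᵀμ̃ξ))·( ηᵀμ̃η − (ξᵀμ̃η)²/(ξᵀμ̃ξ) ) − (√(ξᵀμ̃ξ)/√(ξᵀε̃ξ))·( ηᵀε̃η − (ξᵀε̃η)²/(ξᵀε̃ξ) ) ] = 0. Then K = 0. -/

import Mathlib

open Matrix

lemma quad_pos {M : Matrix (Fin 2) (Fin 2) ℝ} (hM : M.PosDef) {ξ : Fin 2 → ℝ}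
    (hξ : ξ ≠ 0) : 0 < ξ ⬝ᵥ M.mulVec ξ := by
  simpa using hM.dotProduct_mulVec_pos hξ

theorem coefficient_vanishes (ε' μ' : Matrix (Fin 2) (Fin 2) ℝ)
    (hε : ε'.PosDef) (hμ : μ'.PosDef) (hmult : ¬ ∃ c : ℝ, μ' = c • ε')
    (K : ℝ) (U : Set (Fin 2 → ℝ)) (hU : IsOpen U) (hne : U.Nonempty)
    (hU0 : U ⊆ {ξ : Fin 2 → ℝ | ξ ≠ 0})
    (h : ∀ ξ ∈ U, ∀ η : Fin 2 → ℝ,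
        K * ((Real.sqrt (ξ ⬝ᵥ ε'.mulVec ξ) / Real.sqrt (ξ ⬝ᵥ μ'.mulVec ξ)) *
              (η ⬝ᵥ μ'.mulVec η - (ξ ⬝ᵥ μ'.mulVec η) ^ 2 / (ξ ⬝ᵥ μ'.mulVec ξ))
            - (Real.sqrt (ξ ⬝ᵥ μ'.mulVec ξ) / Real.sqrt (ξ ⬝ᵥ ε'.mulVec ξ)) *
              (η ⬝ᵥ ε'.mulVec η - (ξ ⬝ᵥ ε'.mulVec η) ^ 2 / (ξ ⬝ᵥ ε'.mulVec ξ))) = 0) :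
    K = 0 := by
  by_contra hK
  obtain ⟨ξ₀, hξ₀⟩ := hne
  have hεs : ε' 1 0 = ε' 0 1 := by simpa using hε.1.apply 0 1
  have hμs : μ' 1 0 = μ' 0 1 := by simpa using hμ.1.apply 0 1
  set dε : ℝ := ε' 0 0 * ε' 1 1 - ε' 0 1 * ε' 0 1 with hdε
  set dμ : ℝ := μ' 0 0 * μ' 1 1 - μ' 0 1 * μ' 0 1 with hdμ
  have hdεpos : 0 < dε := by
    have := hε.det_pos
    rw [Matrix.det_fin_two, hεs] at this
    exact this
  have hdμpos : 0 < dμ := by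
    have := hμ.det_pos
    rw [Matrix.det_fin_two, hμs] at this
    exact this
  -- Step 1: key identity on U
  have hkey : ∀ ξ ∈ U, (ξ ⬝ᵥ ε'.mulVec ξ)^2 * dμ = (ξ ⬝ᵥ μ'.mulVec ξ)^2 * dε := by
    intro ξ hξ
    have hξ0 : ξ ≠ 0 := hU0 hξ
    have hQε : 0 < ξ ⬝ᵥ ε'.mulVec ξ := quad_pos hε hξ0
    have hQμ : 0 < ξ ⬝ᵥ μ'.mulVec ξ := quad_pos hμ hξ0
    have hE := (mul_eq_zero.mp (h ξ hξ ![-ξ 1, ξ 0])).resolve_left hK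
    set a := Real.sqrt (ξ ⬝ᵥ ε'.mulVec ξ) with hadef
    set b := Real.sqrt (ξ ⬝ᵥ μ'.mulVec ξ) with hbdef
    have ha : 0 < a := Real.sqrt_pos.mpr hQε
    have hb : 0 < b := Real.sqrt_pos.mpr hQμ
    have ha2 : a^2 = ξ ⬝ᵥ ε'.mulVec ξ := Real.sq_sqrt hQε.le
    have hb2 : b^2 = ξ ⬝ᵥ μ'.mulVec ξ := Real.sq_sqrt hQμ.le
    have hw : ξ 0^2 + ξ 1^2 ≠ 0 := by
      have : ξ 0 ≠ 0 ∨ ξ 1 ≠ 0 := by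
        by_contra hc
        push_neg at hc
        exact hξ0 (funext fun i => by fin_cases i <;> simp [hc.1, hc.2])
      rcases this with h' | h' <;> positivity
    rw [← ha2, ← hb2] at hE
    simp only [dotProduct, Matrix.mulVec, Fin.sum_univ_two, Matrix.cons_val_zero,
      Matrix.cons_val_one, Matrix.head_cons] at hE ha2 hb2 ⊢
    field_simp [ha.ne', hb.ne'] at hE
    rw [hμs] at hb2 hE ⊢
    rw [hεs] at ha2 hE ⊢
    have h4 : a^4*dμ*(ξ 0^2+ξ 1^2)^2 = b^4*dε*(ξ 0^2+ξ 1^2)^2 := by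
      linear_combination hE
        + (-(a^4) * (μ' 0 0 * ξ 1^2 - 2*μ' 0 1 * ξ 0 * ξ 1 + μ' 1 1 * ξ 0^2)) * hb2
        + (b^4 * (ε' 0 0 * ξ 1^2 - 2*ε' 0 1 * ξ 0 * ξ 1 + ε' 1 1 * ξ 0^2)) * ha2
    rw [← ha2, ← hb2]
    have h5 := mul_right_cancel₀ (pow_ne_zero 2 hw) h4
    linear_combination h5
  -- Step 2: the two quadratic forms are proportional on U
  set t := Real.sqrt (dε/dμ) with htdef
  have ht : 0 < t := Real.sqrt_pos.mpr (by positivity)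
  have ht2 : t^2 * dμ = dε := by
    have : t^2 = dε/dμ := Real.sq_sqrt (by positivity)
    rw [this]; field_simp
  have hQ : ∀ ξ ∈ U, ξ ⬝ᵥ ε'.mulVec ξ = t * (ξ ⬝ᵥ μ'.mulVec ξ) := by
    intro ξ hξ
    have hξ0 : ξ ≠ 0 := hU0 hξ
    have hQε : 0 < ξ ⬝ᵥ ε'.mulVec ξ := quad_pos hε hξ0
    have hQμ : 0 < ξ ⬝ᵥ μ'.mulVec ξ := quad_pos hμ hξ0
    have hk := hkey ξ hξ
    have hsq : (ξ ⬝ᵥ ε'.mulVec ξ)^2 = (t * (ξ ⬝ᵥ μ'.mulVec ξ))^2 := by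
      have e : (ξ ⬝ᵥ ε'.mulVec ξ)^2 * dμ = (t * (ξ ⬝ᵥ μ'.mulVec ξ))^2 * dμ := by
        linear_combination hk + (-(ξ ⬝ᵥ μ'.mulVec ξ)^2) * ht2
      exact mul_right_cancel₀ hdμpos.ne' e
    calc ξ ⬝ᵥ ε'.mulVec ξ = Real.sqrt ((ξ ⬝ᵥ ε'.mulVec ξ)^2) := (Real.sqrt_sq hQε.le).symm
      _ = Real.sqrt ((t * (ξ ⬝ᵥ μ'.mulVec ξ))^2) := by rw [hsq]
      _ = t * (ξ ⬝ᵥ μ'.mulVec ξ) := Real.sqrt_sq (by positivity)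
  -- Step 3: deduce ε' = t • μ' from the identity on an open set
  obtain ⟨r, hr0, hball⟩ := Metric.isOpen_iff.mp hU ξ₀ hξ₀
  set δ := r/2 with hδdef
  have hδ0 : 0 < δ := by positivity
  have hδr : |δ| < r := by rw [abs_of_pos hδ0]; linarith
  have hpt : ∀ s u : ℝ, |s| < r → |u| < r →
      ε' 0 0 * (ξ₀ 0 + s)^2 + 2 * ε' 0 1 * (ξ₀ 0 + s) * (ξ₀ 1 + u) + ε' 1 1 * (ξ₀ 1 + u)^2
        = t * (μ' 0 0 * (ξ₀ 0 + s)^2 + 2 * μ' 0 1 * (ξ₀ 0 + s) * (ξ₀ 1 + u) + μ' 1 1 * (ξ₀ 1 + u)^2) := by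
    intro s u hs hu
    have hmem : (![ξ₀ 0 + s, ξ₀ 1 + u] : Fin 2 → ℝ) ∈ U := by
      apply hball
      rw [Metric.mem_ball, dist_pi_lt_iff hr0]
      intro i
      fin_cases i <;> simp [Real.dist_eq, hs, hu]
    have := hQ _ hmem
    simp only [dotProduct, Matrix.mulVec, Fin.sum_univ_two, Matrix.cons_val_zero,
      Matrix.cons_val_one, Matrix.head_cons] at this
    rw [hμs, hεs] at this
    linear_combination this
  have h0 := hpt 0 0 (by rwa [abs_zero]) (by rwa [abs_zero])
  have h1 := hpt δ 0 hδr (by rwa [abs_zero])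
  have h2 := hpt (-δ) 0 (by rwa [abs_neg]) (by rwa [abs_zero])
  have h3 := hpt 0 δ (by rwa [abs_zero]) hδr
  have h4 := hpt 0 (-δ) (by rwa [abs_zero]) (by rwa [abs_neg])
  have h5 := hpt δ δ hδr hδr
  have h6 := hpt (-δ) (-δ) (by rwa [abs_neg]) (by rwa [abs_neg])
  have hδ2 : (2:ℝ) * δ^2 ≠ 0 := by positivity
  have c1 : ε' 0 0 = t * μ' 0 0 := by
    have hc : 2*δ^2 * (ε' 0 0 - t * μ' 0 0) = 0 := by linear_combination h1 + h2 - 2*h0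
    have := (mul_eq_zero.mp hc).resolve_left hδ2
    linarith
  have c3 : ε' 1 1 = t * μ' 1 1 := by
    have hc : 2*δ^2 * (ε' 1 1 - t * μ' 1 1) = 0 := by linear_combination h3 + h4 - 2*h0
    have := (mul_eq_zero.mp hc).resolve_left hδ2
    linarith
  have c2 : ε' 0 1 = t * μ' 0 1 := by
    have hc : 2*δ^2 * (2*(ε' 0 1 - t * μ' 0 1)) = 0 := by
      linear_combination h5 + h6 - 2*h0 - 2*δ^2*c1 - 2*δ^2*c3
    have := (mul_eq_zero.mp hc).resolve_left hδ2
    linarith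
  have c2' : ε' 1 0 = t * μ' 1 0 := by rw [hεs, hμs]; exact c2
  refine hmult ⟨1/t, ?_⟩
  ext i j
  fin_cases i <;> fin_cases j
  · show μ' 0 0 = (1/t) * ε' 0 0
    rw [c1]; field_simp
  · show μ' 0 1 = (1/t) * ε' 0 1
    rw [c2]; field_simp
  · show μ' 1 0 = (1/t) * ε' 1 0
    rw [c2']; field_simp
  · show μ' 1 1 = (1/t) * ε' 1 1
    rw [c3]; field_simp
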